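/- Let F be a finitary operator on A → B^ν. Define Y(F) a as the parallel search over the chain (k_n a), where k₀ = λa.step^∞ and k_{n+1} = F k_n. Then Y(F) is a fixed point of F up to pointwise weak bisimilarity (F Y(F) ≈ Y(F) pointwise), and it is the least prefixed point: if F f ⊑ f pointwise then Y(F) ⊑ f pointwise. -/

import Mathlib

inductive Converges {A : Type*} : Computation A → A → Prop
  | ret (a : A) : Converges (Computation.pure a) a
  | step {x : Computation A} {a : A} : Converges x a → Converges x.think a

def Diverge {A : Type*} (x : Computation A) : Prop :=
  ∃ P : Computation A → Prop, P x ∧ ∀ y, P y → ∃ y', y = Computation.think y' ∧ P y'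

def WBisim {A : Type*} (x y : Computation A) : Prop :=
  ∃ R : Computation A → Computation A → Prop, R x y ∧ ∀ u v, R u v →
    (∃ a, Converges u a ∧ Converges v a) ∨
    (∃ u' v', u = Computation.think u' ∧ v = Computation.think v' ∧ R u' v')

def ConvOrder {A : Type*} (x y : Computation A) : Prop :=
  ∃ R : Computation A → Computation A → Prop, R x y ∧ ∀ u v, R u v →
    (∃ a, Converges u a ∧ Converges v a) ∨
    (∃ u' v', u = Computation.think u' ∧ v = Computation.think v' ∧ R u' v') ∨
    (∃ u', u = Computation.think u' ∧ R u' v)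

def stepInf (A : Type*) : Computation A := Computation.empty A

inductive DFinite {A : Type*} : Computation A → Prop
  | ret (a : A) : DFinite (Computation.pure a)
  | step {x : Computation A} : DFinite x → DFinite x.think

def Finitary {A B : Type*} (F : (A → Computation B) → (A → Computation B)) : Prop :=
  ∀ f a b, Converges (F f a) b →
    ∃ l : List (A × B), (∀ p ∈ l, Converges (f p.1) p.2) ∧
      ∀ g : A → Computation B, (∀ p ∈ l, Converges (g p.1) p.2) → Converges (F g a) b


lemma pure_ne_think {A : Type*} (a : A) (x : Computation A) :
    Computation.pure a ≠ Computation.think x := by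
  intro h
  have := congrArg Computation.destruct h
  rw [Computation.destruct_pure, Computation.destruct_think] at this
  exact absurd this (by simp)

lemma think_inj {A : Type*} {x y : Computation A}
    (h : Computation.think x = Computation.think y) : x = y := by
  have := congrArg Computation.destruct h
  rwa [Computation.destruct_think, Computation.destruct_think, Sum.inr.injEq] at this

lemma conv_pure {A : Type*} {a b : A} (h : Converges (Computation.pure a) b) : a = b := by
  generalize hx : Computation.pure a = x at h
  cases h with
  | ret c =>
    have := congrArg Computation.destruct hx
    rwa [Computation.destruct_pure, Computation.destruct_pure, Sum.inl.injEq] at this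
  | step h' => exact absurd hx (pure_ne_think _ _)

lemma conv_think {A : Type*} {x : Computation A} {b : A}
    (h : Converges (Computation.think x) b) : Converges x b := by
  generalize hx : Computation.think x = y at h
  cases h with
  | ret c => exact absurd hx.symm (pure_ne_think _ _)
  | step h' => exact think_inj hx ▸ h'

lemma conv_det {A : Type*} {x : Computation A} {a b : A}
    (ha : Converges x a) (hb : Converges x b) : a = b := by
  induction ha with
  | ret c => exact conv_pure hb
  | step _ ih => exact ih (conv_think hb)

lemma not_conv_empty_aux {A : Type*} {b : A} :
    ∀ x : Computation A, Converges x b → x = Computation.empty A → False := by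
  intro x h
  induction h with
  | ret c =>
    intro he
    have := Computation.destruct_eq_think (Computation.destruct_empty (α := A))
    exact pure_ne_think c _ (he.trans this)
  | step h' ih =>
    intro he
    have := Computation.destruct_eq_think (Computation.destruct_empty (α := A))
    exact ih (think_inj (he.trans this))

lemma not_conv_empty {A : Type*} {b : A} (h : Converges (Computation.empty A) b) : False :=
  not_conv_empty_aux _ h rfl

lemma convOrder_of_imp {A : Type*} {x y : Computation A}
    (h : ∀ b, Converges x b → Converges y b) : ConvOrder x y := by
  refine ⟨fun u v => ∀ b, Converges u b → Converges v b, h, fun u v huv => ?_⟩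
  match hd : Computation.destruct u with
  | Sum.inl a =>
    have hu : u = Computation.pure a := Computation.destruct_eq_pure hd
    exact Or.inl ⟨a, hu ▸ Converges.ret a, huv a (hu ▸ Converges.ret a)⟩
  | Sum.inr u' =>
    have hu : u = Computation.think u' := Computation.destruct_eq_think hd
    exact Or.inr (Or.inr ⟨u', hu, fun b hb => huv b (hu ▸ Converges.step hb)⟩)

lemma convOrder_imp {A : Type*} {x y : Computation A} (h : ConvOrder x y) :
    ∀ b, Converges x b → Converges y b := by
  intro b hb
  obtain ⟨R, hxy, hR⟩ := h
  induction hb generalizing y with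
  | ret a =>
    rcases hR _ _ hxy with ⟨c, hc1, hc2⟩ | ⟨u', v', hu, _, _⟩ | ⟨u', hu, _⟩
    · exact (conv_pure hc1) ▸ hc2
    · exact absurd hu (pure_ne_think _ _)
    · exact absurd hu (pure_ne_think _ _)
  | @step x' a hx' ih =>
    rcases hR _ _ hxy with ⟨c, hc1, hc2⟩ | ⟨u', v', hu, hv, hR'⟩ | ⟨u', hu, hR'⟩
    · exact (conv_det hc1 (Converges.step hx')) ▸ hc2
    · exact hv ▸ Converges.step (ih (think_inj hu ▸ hR'))
    · exact ih (think_inj hu ▸ hR')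

lemma wbisim_of_iff {A : Type*} {x y : Computation A}
    (h : ∀ b, Converges x b ↔ Converges y b) : WBisim x y := by
  refine ⟨fun u v => ∀ b, Converges u b ↔ Converges v b, h, fun u v huv => ?_⟩
  match hdu : Computation.destruct u with
  | Sum.inl a =>
    have hu : u = Computation.pure a := Computation.destruct_eq_pure hdu
    exact Or.inl ⟨a, hu ▸ Converges.ret a, (huv a).1 (hu ▸ Converges.ret a)⟩
  | Sum.inr u' =>
    have hu : u = Computation.think u' := Computation.destruct_eq_think hdu
    match hdv : Computation.destruct v with
    | Sum.inl a =>
      have hv : v = Computation.pure a := Computation.destruct_eq_pure hdv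
      exact Or.inl ⟨a, (huv a).2 (hv ▸ Converges.ret a), hv ▸ Converges.ret a⟩
    | Sum.inr v' =>
      have hv : v = Computation.think v' := Computation.destruct_eq_think hdv
      refine Or.inr ⟨u', v', hu, hv, fun b => ?_⟩
      constructor
      · intro hb
        exact conv_think (hv ▸ (huv b).1 (hu ▸ Converges.step hb))
      · intro hb
        exact conv_think (hu ▸ (huv b).2 (hv ▸ Converges.step hb))

theorem stmt19 {A B : Type*} (F : (A → Computation B) → (A → Computation B))
    (hF : Finitary F) (k : ℕ → A → Computation B)
    (hk0 : k 0 = fun _ => stepInf B)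
    (hks : ∀ n : ℕ, k (n + 1) = F (k n))
    (psearch : (ℕ → Computation B) → Computation B)
    (hp1 : ∀ (f : ℕ → Computation B) (b : B), Converges (psearch f) b → ∃ n, Converges (f n) b)
    (hp2 : ∀ f : ℕ → Computation B, (∀ n m, n ≤ m → ConvOrder (f n) (f m)) →
      ∀ (n : ℕ) (b : B), Converges (f n) b → Converges (psearch f) b)
    (hp3 : ∀ (f : ℕ → Computation B) (y : Computation B),
      (∀ n, ConvOrder (f n) y) → ConvOrder (psearch f) y)
    (Y : A → Computation B) (hY : Y = fun a => psearch (fun n => k n a)) :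
    (∀ a : A, WBisim (F Y a) (Y a)) ∧
    (∀ f : A → Computation B, (∀ a, ConvOrder (F f a) (f a)) → ∀ a, ConvOrder (Y a) (f a)) := by
  subst hY
  -- chain monotonicity in implication form
  have hmono : ∀ n a b, Converges (k n a) b → Converges (k (n + 1) a) b := by
    intro n
    induction n with
    | zero =>
      intro a b hb
      rw [hk0] at hb
      exact absurd hb (fun h => not_conv_empty h)
    | succ m ih =>
      intro a b hb
      rw [hks m] at hb
      obtain ⟨l, hl, hg⟩ := hF (k m) a b hb
      rw [hks (m + 1)]
      exact hg (k (m + 1)) (fun p hp => ih p.1 p.2 (hl p hp))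
  have hmono' : ∀ n m, n ≤ m → ∀ a b, Converges (k n a) b → Converges (k m a) b := by
    intro n m hnm
    induction hnm with
    | refl => exact fun a b h => h
    | step h ih => exact fun a b hb => hmono _ a b (ih a b hb)
  have hchain : ∀ a, ∀ n m, n ≤ m → ConvOrder (k n a) (k m a) := fun a n m hnm =>
    convOrder_of_imp (fun b => hmono' n m hnm a b)
  -- characterization of Y convergence
  have hYc : ∀ a b, Converges (psearch fun n => k n a) b ↔ ∃ n, Converges (k n a) b := by
    intro a b
    constructor
    · exact hp1 _ b
    · rintro ⟨n, hn⟩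
      exact hp2 _ (fun n m h => hchain a n m h) n b hn
  constructor
  · intro a
    apply wbisim_of_iff
    intro b
    constructor
    · intro hb
      obtain ⟨l, hl, hg⟩ := hF _ a b hb
      -- each pair converges at some stage; take a uniform stage
      have key : ∀ l' : List (A × B), (∀ p ∈ l', ∃ n, Converges (k n p.1) p.2) →
          ∃ N, ∀ p ∈ l', Converges (k N p.1) p.2 := by
        intro l'
        induction l' with
        | nil => exact fun _ => ⟨0, by simp⟩
        | cons p t iht =>
          intro hl'
          obtain ⟨N, hN⟩ := iht (fun q hq => hl' q (List.mem_cons_of_mem p hq))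
          obtain ⟨n, hn⟩ := hl' p (List.mem_cons_self (a := p) (l := t))
          refine ⟨max n N, fun q hq => ?_⟩
          rcases List.mem_cons.1 hq with rfl | hq
          · exact hmono' n _ (le_max_left n N) _ _ hn
          · exact hmono' N _ (le_max_right n N) _ _ (hN q hq)
      obtain ⟨N, hN⟩ := key l (fun p hp => (hYc p.1 p.2).1 (hl p hp))
      have : Converges (k (N + 1) a) b := by
        rw [hks N]; exact hg (k N) hN
      exact (hYc a b).2 ⟨N + 1, this⟩
    · intro hb
      obtain ⟨n, hn⟩ := (hYc a b).1 hb
      match n, hn with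
      | 0, hn =>
        rw [hk0] at hn
        exact absurd hn (fun h => not_conv_empty h)
      | m + 1, hn =>
        rw [hks m] at hn
        obtain ⟨l, hl, hg⟩ := hF (k m) a b hn
        exact hg _ (fun p hp => (hYc p.1 p.2).2 ⟨m, hl p hp⟩)
  · intro f hf a
    apply convOrder_of_imp
    intro b hb
    obtain ⟨n, hn⟩ := (hYc a b).1 hb
    clear hb
    induction n generalizing a b with
    | zero =>
      rw [hk0] at hn
      exact absurd hn (fun h => not_conv_empty h)
    | succ m ih =>
      rw [hks m] at hn
      obtain ⟨l, hl, hg⟩ := hF (k m) a b hn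
      exact convOrder_imp (hf a) b (hg f (fun p hp => ih p.1 p.2 (hl p hp)))
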